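/- Let α₁, α₂, α₃, α₄ be m-th roots of unity (m a positive integer). Then at least one of the six numbers αᵢ + αⱼ for i ≠ j is not an m-th root of unity. -/

import Mathlib

lemma roots2_key (a b : ℂ) (ha : ‖a‖ = 1) (hb : ‖b‖ = 1)
    (hab : ‖a + b‖ = 1) :
    (a * (starRingEnd ℂ) b).re = -(1/2) ∧ (a * (starRingEnd ℂ) b).im ^ 2 = 3/4 := by
  have h1 : Complex.normSq a = 1 := by rw [← Complex.sq_norm, ha]; norm_num
  have h2 : Complex.normSq b = 1 := by rw [← Complex.sq_norm, hb]; norm_num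
  have h3 : Complex.normSq (a + b) = 1 := by rw [← Complex.sq_norm, hab]; norm_num
  have h4 := Complex.normSq_add a b
  have hre : (a * (starRingEnd ℂ) b).re = -(1/2) := by
    rw [h1, h2, h3] at h4; linarith
  refine ⟨hre, ?_⟩
  have h5 : Complex.normSq (a * (starRingEnd ℂ) b) = 1 := by
    rw [map_mul, Complex.normSq_conj, h1, h2]; ring
  rw [Complex.normSq_apply] at h5
  nlinarith [hre]

theorem roots2 (m : ℕ) (hm : 0 < m) (α : Fin 4 → ℂ) (h : ∀ i, α i ^ m = 1) :
    ∃ i j : Fin 4, i ≠ j ∧ (α i + α j) ^ m ≠ 1 := by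
  by_contra hc
  push_neg at hc
  have habs : ∀ z : ℂ, z ^ m = 1 → ‖z‖ = 1 := by
    intro z hz
    have h1 : ‖z‖ ^ m = 1 := by
      rw [← norm_pow, hz, norm_one]
    rcases lt_trichotomy (‖z‖) 1 with hlt | heq | hgt
    · have := pow_lt_one₀ (norm_nonneg z) hlt hm.ne'
      nlinarith
    · exact heq
    · have := one_lt_pow₀ hgt hm.ne'
      nlinarith
  have h1 : ∀ i, ‖α i‖ = 1 := fun i => habs _ (h i)
  have h2 : ∀ i j : Fin 4, i ≠ j → ‖α i + α j‖ = 1 :=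
    fun i j hij => habs _ (hc i j hij)
  have hz : ∀ i : Fin 4, i ≠ 0 → ((α i * (starRingEnd ℂ) (α 0)).re = -(1/2) ∧
      (α i * (starRingEnd ℂ) (α 0)).im ^ 2 = 3/4) :=
    fun i hi => roots2_key _ _ (h1 i) (h1 0) (h2 i 0 hi)
  obtain ⟨r1, i1⟩ := hz 1 (by decide)
  obtain ⟨r2, i2⟩ := hz 2 (by decide)
  obtain ⟨r3, i3⟩ := hz 3 (by decide)
  have hconj : (starRingEnd ℂ) (α 0) ≠ 0 := by
    intro h0
    have := h1 0
    rw [← Complex.norm_conj, h0] at this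
    simp at this
  have hcase : ∀ x y : ℝ, x ^ 2 = 3/4 → y ^ 2 = 3/4 → x = y ∨ x = -y := by
    intro x y hx hy
    have : (x - y) * (x + y) = 0 := by nlinarith
    rcases mul_eq_zero.mp this with h' | h'
    · left; linarith
    · right; linarith
  have hzeq : ∀ j k : Fin 4, j ≠ 0 → k ≠ 0 →
      (α j * (starRingEnd ℂ) (α 0)).im = (α k * (starRingEnd ℂ) (α 0)).im → α j = α k := by
    intro j k hj hk him
    have hre : (α j * (starRingEnd ℂ) (α 0)).re = (α k * (starRingEnd ℂ) (α 0)).re := by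
      rw [(hz j hj).1, (hz k hk).1]
    have : α j * (starRingEnd ℂ) (α 0) = α k * (starRingEnd ℂ) (α 0) := Complex.ext hre him
    exact mul_right_cancel₀ hconj this
  have key : ∃ j k : Fin 4, j ≠ k ∧ α j = α k := by
    rcases hcase _ _ i1 i2 with h12 | h12
    · exact ⟨1, 2, by decide, hzeq 1 2 (by decide) (by decide) h12⟩
    · rcases hcase _ _ i3 i1 with h31 | h31
      · exact ⟨3, 1, by decide, hzeq 3 1 (by decide) (by decide) h31⟩
      · exact ⟨3, 2, by decide, hzeq 3 2 (by decide) (by decide) (by linarith)⟩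
  obtain ⟨j, k, hjk, heq⟩ := key
  have hfin := h2 j k hjk
  rw [heq, ← two_mul, norm_mul] at hfin
  rw [h1 k] at hfin
  simp [Complex.norm_two] at hfin
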